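/- Let M be a smooth manifold and let Ric : T_x M → ℝ be a quadratic form on each tangent space given by Ric(v) = λ(x) F(v)² where F : TM → [0,∞) is positively 1-homogeneous and λ : M → ℝ. Fix x with λ(x) ≠ 0. Then v ↦ F(v)² restricted to T_x M is a quadratic form, hence F restricted to T_x M is the norm induced by a (semi-definite) symmetric bilinear form; if F is moreover a Minkowski norm, F_x comes from an inner product. -/

import Mathlib

/-- If on a smooth manifold the Ricci curvature is a quadratic form on each tangent
space with `Ric(v) = λ(x) F(v)²` for a positively 1-homogeneous `F`, then at each
point `x` with `λ(x) ≠ 0` the function `v ↦ F(v)²` is a quadratic form, i.e. induced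
by a symmetric bilinear form; if moreover `F` is positive away from `0` (a Minkowski
norm), this bilinear form is positive definite, i.e. an inner product. -/
theorem stmt_7 {E H : Type*} [NormedAddCommGroup E] [NormedSpace ℝ E]
    [TopologicalSpace H] (I : ModelWithCorners ℝ E H)
    {M : Type*} [TopologicalSpace M] [ChartedSpace H M]
    (Ric : ∀ x : M, QuadraticForm ℝ (TangentSpace I x))
    (F : ∀ x : M, TangentSpace I x → ℝ)
    (hFnn : ∀ x v, 0 ≤ F x v)
    (hFhom : ∀ (x : M) (t : ℝ), 0 < t → ∀ v : TangentSpace I x,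
      F x (t • v) = t * F x v)
    (lam : M → ℝ)
    (hRic : ∀ (x : M) (v : TangentSpace I x), Ric x v = lam x * (F x v) ^ 2)
    (x : M) (hx : lam x ≠ 0) :
    ∃ B : LinearMap.BilinForm ℝ (TangentSpace I x), B.IsSymm ∧
      (∀ v : TangentSpace I x, (F x v) ^ 2 = B v v) ∧
      ((∀ v : TangentSpace I x, v ≠ 0 → 0 < F x v) →
        ∀ v : TangentSpace I x, v ≠ 0 → 0 < B v v) := by
  set Q : QuadraticForm ℝ (TangentSpace I x) := (lam x)⁻¹ • Ric x with hQ
  have hQapp : ∀ v, Q v = (F x v) ^ 2 := by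
    intro v
    simp only [hQ, QuadraticMap.smul_apply, hRic x v, smul_eq_mul,
      ← mul_assoc, inv_mul_cancel₀ hx, one_mul]
  refine ⟨QuadraticMap.associated (R := ℝ) Q, ?_, ?_, ?_⟩
  · exact ⟨QuadraticMap.associated_isSymm ℝ Q⟩
  · intro v
    rw [QuadraticMap.associated_eq_self_apply, hQapp]
  · intro hpos v hv
    rw [QuadraticMap.associated_eq_self_apply, hQapp]
    exact pow_pos (hpos v hv) 2
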